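/- arXiv:2504.10283 — 3 statements merged into one kernel-verified Lean document; each statement's English description precedes it below -/
import Mathlib

section
/- Let μ be a positive probability vector in ℝⁿ and a ∈ ℝⁿ a tangent vector with ∑_i a_i = 0. Then the curve γ(t) = softmax(log μ + t·a/μ) (componentwise division) satisfies the geodesic equation γ̈ − (γ̇²/γ − γ ∑_j γ̇_j²/γ_j) = 0 componentwise, where squares and divisions are componentwise. -/
/-- The curve `γ(t) = softmax(log μ + t·a/μ)` satisfies the α = 1 geodesic equation
`γ̈ₖ = γ̇ₖ²/γₖ − γₖ ∑ⱼ γ̇ⱼ²/γⱼ` componentwise. -/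
theorem e_geodesic_equation (n : ℕ) (μ : Fin n → ℝ) (a : Fin n → ℝ)
    (hμpos : ∀ i, 0 < μ i) (hμsum : ∑ i, μ i = 1) (hasum : ∑ i, a i = 0)
    (γ : ℝ → Fin n → ℝ)
    (hγ : ∀ t i, γ t i =
      Real.exp (Real.log (μ i) + t * a i / μ i) /
        ∑ j, Real.exp (Real.log (μ j) + t * a j / μ j)) :
    ∀ t k, deriv (deriv (fun s => γ s k)) t =
      (deriv (fun s => γ s k) t) ^ 2 / γ t k -
        γ t k * ∑ j, (deriv (fun s => γ s j) t) ^ 2 / γ t j := by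
  classical
  intro t k
  set c : Fin n → ℝ := fun i => a i / μ i with hc
  set F : ℝ → Fin n → ℝ := fun s i => Real.exp (Real.log (μ i) + s * a i / μ i) with hFdef
  set S : ℝ → ℝ := fun s => ∑ j, F s j with hSdef
  set S' : ℝ → ℝ := fun s => ∑ j, c j * F s j with hS'def
  have hFpos : ∀ s i, 0 < F s i := fun s i => Real.exp_pos _
  have hSpos : ∀ s, 0 < S s :=
    fun s => Finset.sum_pos (fun i _ => hFpos s i) ⟨k, Finset.mem_univ k⟩
  have hγfun : ∀ j, (fun s => γ s j) = fun s => F s j / S s := by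
    intro j; funext s; exact hγ s j
  have hF' : ∀ s i, HasDerivAt (fun u => F u i) (c i * F s i) s := by
    intro s i
    have h1 : HasDerivAt (fun u : ℝ => Real.log (μ i) + u * a i / μ i) (c i) s := by
      have h2 := (((hasDerivAt_id s).mul_const (a i)).div_const (μ i)).const_add
        (Real.log (μ i))
      simpa [hc] using h2
    simpa [mul_comm] using h1.exp
  have hSderiv : ∀ s, HasDerivAt S (S' s) s := by
    intro s
    exact HasDerivAt.fun_sum (fun j _ => hF' s j)
  have hS'deriv : ∀ s, HasDerivAt S' (∑ j, c j * (c j * F s j)) s := by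
    intro s
    exact HasDerivAt.fun_sum (fun j _ => (hF' s j).const_mul (c j))
  have hγ' : ∀ s j, HasDerivAt (fun u => γ u j)
      ((c j * F s j * S s - F s j * S' s) / (S s) ^ 2) s := by
    intro s j
    rw [hγfun j]
    exact (hF' s j).div (hSderiv s) (ne_of_gt (hSpos s))
  have hd1 : ∀ j, deriv (fun s => γ s j)
      = fun s => (c j * F s j * S s - F s j * S' s) / (S s) ^ 2 :=
    fun j => funext fun s => (hγ' s j).deriv
  -- second derivative at t
  have hN : HasDerivAt (fun u => c k * F u k * S u - F u k * S' u)
      ((c k * (c k * F t k) * S t + c k * F t k * S' t)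
        - (c k * F t k * S' t + F t k * (∑ j, c j * (c j * F t j)))) t := by
    exact (((hF' t k).const_mul (c k)).mul (hSderiv t)).sub ((hF' t k).mul (hS'deriv t))
  have hden : HasDerivAt (fun u => (S u) ^ 2) (2 * S t ^ 1 * S' t) t := by
    simpa using (hSderiv t).fun_pow 2
  have h2nd := hN.div hden (pow_ne_zero 2 (hSpos t).ne')
  have e1 : deriv (deriv (fun s => γ s k)) t
      = ((c k * (c k * F t k) * S t + c k * F t k * S' t
          - (c k * F t k * S' t + F t k * ∑ j, c j * (c j * F t j))) * S t ^ 2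
          - (c k * F t k * S t - F t k * S' t) * (2 * S t ^ 1 * S' t)) / (S t ^ 2) ^ 2 := by
    rw [hd1 k]; exact h2nd.deriv
  have hγval : ∀ j, γ t j = F t j / S t := fun j => hγ t j
  have hdval : ∀ j, deriv (fun s => γ s j) t
      = (c j * F t j * S t - F t j * S' t) / (S t) ^ 2 := fun j => (hγ' t j).deriv
  have hsum : ∑ j, (deriv (fun s => γ s j) t) ^ 2 / γ t j
      = (S t ^ 2 * (∑ j, c j * (c j * F t j)) - S t * S' t ^ 2) / S t ^ 3 := by
    have h1 : ∀ j, (deriv (fun s => γ s j) t) ^ 2 / γ t j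
        = (S t ^ 2 * (c j * (c j * F t j)) - 2 * S t * S' t * (c j * F t j)
            + S' t ^ 2 * F t j) / S t ^ 3 := by
      intro j
      rw [hγval j, hdval j]
      have hA := (hSpos t).ne'
      have hF0 := (hFpos t j).ne'
      field_simp
      ring
    rw [Finset.sum_congr rfl (fun j _ => h1 j), ← Finset.sum_div]
    congr 1
    rw [Finset.sum_add_distrib, Finset.sum_sub_distrib, ← Finset.mul_sum,
      ← Finset.mul_sum, ← Finset.mul_sum]
    have hA : ∑ j, F t j = S t := rfl
    have hB : ∑ j, c j * F t j = S' t := rfl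
    rw [hA, hB]
    ring
  rw [e1, hdval k, hγval k, hsum]
  have hA := (hSpos t).ne'
  have hF0 := (hFpos t k).ne'
  field_simp
  ring
end

section
/- Fix a unit vector x on the positive orthant of the unit sphere in ℝⁿ and a tangent vector u with ⟨x,u⟩ = 0 and ‖u‖₂ ≠ 0. Then the reparameterization τ(t) = tan(‖u‖₂ t)/‖u‖₂ satisfies the ODE τ̈(t) = 2 (∑_i (x_i + τ u_i) u_i)/‖x + τ u‖₂² · τ̇(t)² with τ(0) = 0 and τ̇(0) = 1, and the normalized curve (x + τ(t)u)/‖x + τ(t)u‖₂ equals the spherical geodesic x cos(‖u‖₂ t) + (u/‖u‖₂) sin(‖u‖₂ t). -/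
/-- The reparameterization `τ(t) = tan(‖u‖t)/‖u‖` satisfies the normalization ODE with
`τ(0) = 0`, `τ̇(0) = 1`, and the normalized curve `(x + τu)/‖x + τu‖₂` equals the
spherical geodesic `x cos(‖u‖t) + (u/‖u‖) sin(‖u‖t)`. -/
theorem sphere_reparameterization_ivp (n : ℕ) (x u : Fin n → ℝ)
    (hxpos : ∀ i, 0 < x i) (hx : ∑ i, x i ^ 2 = 1)
    (hxu : ∑ i, x i * u i = 0) (hu : Real.sqrt (∑ i, u i ^ 2) ≠ 0)
    (τ : ℝ → ℝ)
    (hτ : ∀ t, τ t = Real.tan (Real.sqrt (∑ i, u i ^ 2) * t) / Real.sqrt (∑ i, u i ^ 2)) :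
    τ 0 = 0 ∧ deriv τ 0 = 1 ∧
      ∀ t : ℝ, |t| * Real.sqrt (∑ i, u i ^ 2) < Real.pi / 2 →
        (deriv (deriv τ) t =
            2 * (∑ i, (x i + τ t * u i) * u i) / (∑ i, (x i + τ t * u i) ^ 2) *
              (deriv τ t) ^ 2) ∧
        (∀ i, (x i + τ t * u i) / Real.sqrt (∑ j, (x j + τ t * u j) ^ 2) =
            x i * Real.cos (Real.sqrt (∑ j, u j ^ 2) * t) +
              u i / Real.sqrt (∑ j, u j ^ 2) *
                Real.sin (Real.sqrt (∑ j, u j ^ 2) * t)) := by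
  set c := Real.sqrt (∑ i, u i ^ 2) with hcdef
  have hnn : (0:ℝ) ≤ ∑ i, u i ^ 2 := by positivity
  have hc2 : ∑ i, u i ^ 2 = c ^ 2 := (Real.sq_sqrt hnn).symm
  have hcpos : 0 < c := lt_of_le_of_ne (Real.sqrt_nonneg _) (Ne.symm hu)
  -- τ has derivative 1/cos(cs)^2 where cos(cs) ≠ 0
  have hτfun : τ = fun s => Real.tan (c * s) / c := funext hτ
  have hderivτ : ∀ s : ℝ, Real.cos (c * s) ≠ 0 →
      HasDerivAt τ (1 / Real.cos (c * s) ^ 2) s := by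
    intro s hs
    have h1 : HasDerivAt (fun r : ℝ => c * r) c s := by
      simpa using (hasDerivAt_id s).const_mul c
    have h2 := (Real.hasDerivAt_tan hs).comp s h1
    have h3 := h2.div_const c
    rw [hτfun]
    exact h3.congr_deriv (mul_div_cancel_right₀ _ hu)
  refine ⟨by simp [hτ], ?_, ?_⟩
  · have h0 : Real.cos (c * 0) ≠ 0 := by simp
    have := (hderivτ 0 h0).deriv
    simpa using this
  intro t ht
  have hct : |c * t| < Real.pi / 2 := by
    rw [abs_mul, abs_of_pos hcpos, mul_comm]
    exact ht
  have hcos : 0 < Real.cos (c * t) := Real.cos_pos_of_mem_Ioo (abs_lt.mp hct |> fun h => ⟨h.1, h.2⟩)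
  have hcosne : Real.cos (c * t) ≠ 0 := ne_of_gt hcos
  -- sums
  have hsum1 : ∑ i, (x i + τ t * u i) * u i = τ t * c ^ 2 := by
    have : ∀ i ∈ Finset.univ, (x i + τ t * u i) * u i = x i * u i + τ t * u i ^ 2 :=
      fun i _ => by ring
    rw [Finset.sum_congr rfl this, Finset.sum_add_distrib, hxu, ← Finset.mul_sum, hc2, zero_add]
  have hsum2 : ∑ i, (x i + τ t * u i) ^ 2 = 1 + (τ t) ^ 2 * c ^ 2 := by
    have : ∀ i ∈ Finset.univ, (x i + τ t * u i) ^ 2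
        = x i ^ 2 + 2 * τ t * (x i * u i) + (τ t) ^ 2 * u i ^ 2 := fun i _ => by ring
    rw [Finset.sum_congr rfl this, Finset.sum_add_distrib, Finset.sum_add_distrib, hx,
      ← Finset.mul_sum, ← Finset.mul_sum, hxu, hc2]
    ring
  have htval : τ t = Real.tan (c * t) / c := hτ t
  have htan : Real.tan (c * t) = Real.sin (c * t) / Real.cos (c * t) := Real.tan_eq_sin_div_cos _
  have hpyth : Real.sin (c * t) ^ 2 + Real.cos (c * t) ^ 2 = 1 := Real.sin_sq_add_cos_sq _
  constructor
  · -- ODE part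
    -- deriv τ agrees with s ↦ 1/cos(cs)^2 near t
    have hcont : Continuous fun s : ℝ => Real.cos (c * s) :=
      Real.continuous_cos.comp (continuous_const.mul continuous_id)
    have hopen : IsOpen {s : ℝ | Real.cos (c * s) ≠ 0} := isOpen_ne.preimage hcont
    have hmem : t ∈ {s : ℝ | Real.cos (c * s) ≠ 0} := hcosne
    have hev : deriv τ =ᶠ[nhds t] fun s => 1 / Real.cos (c * s) ^ 2 :=
      Filter.eventually_of_mem (hopen.mem_nhds hmem) fun s hs => (hderivτ s hs).deriv
    have hd1 : deriv τ t = 1 / Real.cos (c * t) ^ 2 := (hderivτ t hcosne).deriv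
    have hd2 : deriv (deriv τ) t = deriv (fun s => 1 / Real.cos (c * s) ^ 2) t := hev.deriv_eq
    -- derivative of 1/cos(cs)^2
    have h1 : HasDerivAt (fun r : ℝ => c * r) c t := by
      simpa using (hasDerivAt_id t).const_mul c
    have h2 : HasDerivAt (fun s : ℝ => Real.cos (c * s)) (-Real.sin (c * t) * c) t := h1.cos
    have h3 := (h2.pow 2).inv (pow_ne_zero 2 hcosne)
    have h4 : deriv (fun s => 1 / Real.cos (c * s) ^ 2) t =
        -(2 * Real.cos (c * t) * (-Real.sin (c * t) * c)) / (Real.cos (c * t) ^ 2) ^ 2 := by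
      simp only [one_div]
      rw [show (fun s => (Real.cos (c * s) ^ 2)⁻¹) = ((fun s => Real.cos (c * s)) ^ 2)⁻¹ from rfl, h3.deriv]
      norm_num
    rw [hd2, h4, hd1, hsum1, hsum2, htval, htan]
    field_simp
    linear_combination Real.sin (c*t) * hpyth
  · -- geodesic part
    intro i
    rw [hsum2, htval, htan]
    have hden : 1 + (Real.sin (c * t) / Real.cos (c * t) / c) ^ 2 * c ^ 2
        = (1 / Real.cos (c * t)) ^ 2 := by
      field_simp
      nlinarith [hpyth]
    rw [hden, Real.sqrt_sq (by positivity)]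
    rw [mul_comm c t] at *
    field_simp
end

section
/- Let x, y be points on the positive orthant of the unit sphere in ℝⁿ with θ = arccos(⟨x,y⟩) ∈ (0, π/2). Then τ(t) = tan(tθ)/(sin θ + (1 − cos θ) tan(tθ)) satisfies τ(0) = 0, τ(1) = 1, and τ̇(0) = θ/sin θ, and the curve (x + τ(t)(y−x))/‖x + τ(t)(y−x)‖₂ equals the great-circle interpolation (x sin((1−t)θ) + y sin(tθ))/sin θ. -/
/-- The boundary-value reparameterization `τ(t) = tan(tθ)/(sin θ + (1 − cos θ)tan(tθ))`
satisfies `τ(0) = 0`, `τ(1) = 1`, `τ̇(0) = θ/sin θ`, and the normalized linear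
interpolation equals the great-circle interpolation. -/
theorem sphere_reparameterization_bvp (n : ℕ) (x y : Fin n → ℝ)
    (hxpos : ∀ i, 0 < x i) (hypos : ∀ i, 0 < y i)
    (hx : ∑ i, x i ^ 2 = 1) (hy : ∑ i, y i ^ 2 = 1)
    (θ : ℝ) (hθdef : θ = Real.arccos (∑ i, x i * y i))
    (hθ : θ ∈ Set.Ioo 0 (Real.pi / 2))
    (τ : ℝ → ℝ)
    (hτ : ∀ t, τ t = Real.tan (t * θ) /
      (Real.sin θ + (1 - Real.cos θ) * Real.tan (t * θ))) :
    τ 0 = 0 ∧ τ 1 = 1 ∧ deriv τ 0 = θ / Real.sin θ ∧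
      ∀ t ∈ Set.Icc (0 : ℝ) 1, ∀ i,
        (x i + τ t * (y i - x i)) /
            Real.sqrt (∑ j, (x j + τ t * (y j - x j)) ^ 2) =
          (x i * Real.sin ((1 - t) * θ) + y i * Real.sin (t * θ)) / Real.sin θ := by
  obtain ⟨hθ0, hθπ⟩ := hθ
  have hπ := Real.pi_pos
  have hs : 0 < Real.sin θ :=
    Real.sin_pos_of_pos_of_lt_pi hθ0 (by linarith)
  have hc : 0 < Real.cos θ :=
    Real.cos_pos_of_mem_Ioo ⟨by linarith, hθπ⟩
  have hc1 : Real.cos θ ≤ 1 := Real.cos_le_one θ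
  have hCS : (∑ i, x i * y i) ^ 2 ≤ 1 := by
    have := Finset.sum_mul_sq_le_sq_mul_sq Finset.univ x y
    rw [hx, hy] at this; simpa using this
  have hcosθ : Real.cos θ = ∑ i, x i * y i := by
    rw [hθdef]; exact Real.cos_arccos (by nlinarith) (by nlinarith)
  have hτfun : τ = fun t => Real.tan (t * θ) /
      (Real.sin θ + (1 - Real.cos θ) * Real.tan (t * θ)) := funext hτ
  subst hτfun
  refine ⟨by simp, ?_, ?_, ?_⟩
  · -- τ 1 = 1
    have hden : Real.sin θ + (1 - Real.cos θ) * (Real.sin θ / Real.cos θ)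
        = Real.sin θ / Real.cos θ := by
      field_simp
      ring
    simp only [one_mul, Real.tan_eq_sin_div_cos, hden]
    exact div_self (by positivity)
  · -- derivative at 0
    have h1 : HasDerivAt (fun t : ℝ => t * θ) θ 0 := by
      simpa using (hasDerivAt_id (0 : ℝ)).mul_const θ
    have h2 : HasDerivAt Real.tan 1 ((0 : ℝ) * θ) := by
      have := Real.hasDerivAt_tan (x := (0 : ℝ) * θ) (by simp)
      simpa using this
    have hN : HasDerivAt (fun t : ℝ => Real.tan (t * θ)) θ 0 := by
      have h3 := h2.comp 0 h1
      rw [one_mul] at h3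
      exact h3
    have hD : HasDerivAt
        (fun t : ℝ => Real.sin θ + (1 - Real.cos θ) * Real.tan (t * θ))
        ((1 - Real.cos θ) * θ) 0 := ((hN.const_mul _)).const_add _
    have hne : Real.sin θ + (1 - Real.cos θ) * Real.tan (0 * θ) ≠ 0 := by
      simp [hs.ne']
    have key := hN.div hD hne
    refine key.deriv.trans ?_
    simp only [zero_mul, Real.tan_zero, mul_zero, zero_mul, sub_zero, add_zero]
    rw [sq]
    field_simp
  · -- main geometric identity
    intro t ht i
    set u := t * θ with hu
    set v := (1 - t) * θ with hv
    have huv : u + v = θ := by rw [hu, hv]; ring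
    have hu0 : 0 ≤ u := mul_nonneg ht.1 hθ0.le
    have huθ : u ≤ θ := by nlinarith [ht.2]
    have hv0 : 0 ≤ v := mul_nonneg (by linarith [ht.2]) hθ0.le
    have hvθ : v ≤ θ := by nlinarith [ht.1]
    have hcu : 0 < Real.cos u := Real.cos_pos_of_mem_Ioo ⟨by linarith, by linarith⟩
    set a := Real.sin v with ha
    set b := Real.sin u with hb
    have hsu : 0 ≤ b := Real.sin_nonneg_of_nonneg_of_le_pi hu0 (by linarith)
    have hsv : 0 ≤ a := Real.sin_nonneg_of_nonneg_of_le_pi hv0 (by linarith)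
    have hsθ : Real.sin θ = b * Real.cos v + Real.cos u * a := by
      rw [← huv, Real.sin_add]
    have hcθ : Real.cos θ = Real.cos u * Real.cos v - b * a := by
      rw [← huv, Real.cos_add]
    set K := Real.sin θ * Real.cos u + (1 - Real.cos θ) * b with hK
    have hKpos : 0 < K :=
      add_pos_of_pos_of_nonneg (mul_pos hs hcu)
        (mul_nonneg (by linarith) hsu)
    have hpyu := Real.sin_sq_add_cos_sq u
    have hpyv := Real.sin_sq_add_cos_sq v
    have hKab : K = a + b := by
      rw [hK, hsθ, hcθ]
      linear_combination a * hpyu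
    have hτt : Real.tan (t * θ) /
        (Real.sin θ + (1 - Real.cos θ) * Real.tan (t * θ)) = b / K := by
      rw [← hu, Real.tan_eq_sin_div_cos, ← hb]
      have hd : Real.sin θ + (1 - Real.cos θ) * (b / Real.cos u)
          = K / Real.cos u := by
        rw [hK]; field_simp
      rw [hd, div_div_div_cancel_right₀ hcu.ne']
    have hcoord : ∀ j, x j + Real.tan (t * θ) /
        (Real.sin θ + (1 - Real.cos θ) * Real.tan (t * θ)) * (y j - x j)
        = (a * x j + b * y j) / K := by
      intro j
      rw [hτt, hKab]
      have : a + b ≠ 0 := by rw [← hKab]; exact hKpos.ne'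
      field_simp
      ring
    have hexp : ∑ j, (x j + Real.tan (t * θ) /
        (Real.sin θ + (1 - Real.cos θ) * Real.tan (t * θ)) * (y j - x j)) ^ 2
        = (Real.sin θ / K) ^ 2 := by
      have e1 : ∀ j, (x j + Real.tan (t * θ) /
          (Real.sin θ + (1 - Real.cos θ) * Real.tan (t * θ)) * (y j - x j)) ^ 2
          = (a ^ 2 * x j ^ 2 + 2 * a * b * (x j * y j) + b ^ 2 * y j ^ 2) / K ^ 2 := by
        intro j
        rw [hcoord j, div_pow]
        congr 1
        ring
      rw [Finset.sum_congr rfl (fun j _ => e1 j), ← Finset.sum_div]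
      have e2 : ∑ j, (a ^ 2 * x j ^ 2 + 2 * a * b * (x j * y j) + b ^ 2 * y j ^ 2)
          = a ^ 2 + 2 * a * b * Real.cos θ + b ^ 2 := by
        rw [hcosθ]
        simp only [Finset.sum_add_distrib, ← Finset.mul_sum, hx, hy]
        ring
      rw [e2]
      have e3 : a ^ 2 + 2 * a * b * Real.cos θ + b ^ 2 = Real.sin θ ^ 2 := by
        rw [hsθ, hcθ]
        linear_combination (-(a ^ 2)) * hpyu + (-(b ^ 2)) * hpyv
      rw [e3, div_pow]
    rw [hcoord i, hexp, Real.sqrt_sq (by positivity)]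
    rw [div_div_div_cancel_right₀ hKpos.ne']
    congr 1
    ring
end
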